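/- Let K be a field of characteristic zero and f ∈ K[[z]] with zero constant term. Define the sequence (g_i) by g₀ = 1 and g_{i+1} = (g_i·(1 + f − log(g_i))) mod z^{2^{i+1}}. Then each g_i has constant term 1 and g_i ≡ exp(f) mod z^{2^i} for all i ≥ 0; i.e., Brent's Newton iteration for the power series exponential doubles the precision at each step. -/

import Mathlib

open PowerSeries

/-- `exp(f) = Σ_{k≥0} f^k / k!` for a power series `f` with zero constant term
(the sum is well defined coefficientwise since `f^k` has order `≥ k`). -/
noncomputable def expPS {K : Type*} [Field K] (f : PowerSeries K) : PowerSeries K :=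
  PowerSeries.mk fun n => ∑ k ∈ Finset.range (n + 1),
    ((k.factorial : K))⁻¹ * coeff n (f ^ k)

/-- `log(g) = -Σ_{k≥1} (1-g)^k / k` for a power series `g` with constant term `1`. -/
noncomputable def logPS {K : Type*} [Field K] (g : PowerSeries K) : PowerSeries K :=
  PowerSeries.mk fun n => -∑ k ∈ Finset.Icc 1 n, ((k : K))⁻¹ * coeff n ((1 - g) ^ k)

section Aux

open Finset
open scoped PowerSeries

variable {K : Type*} [Field K]


lemma coeff_pow_mul_zero {f c : PowerSeries K} (hf : constantCoeff f = 0)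
    {k b : ℕ} (h : b < k) : coeff b (f ^ k * c) = 0 := by
  have h1 : (X : PowerSeries K) ^ k ∣ f ^ k * c :=
    dvd_mul_of_dvd_left (pow_dvd_pow_of_dvd (PowerSeries.X_dvd_iff.mpr hf) k) c
  exact (PowerSeries.X_pow_dvd_iff.mp h1) b h

lemma coeff_pow_zero {f : PowerSeries K} (hf : constantCoeff f = 0)
    {k b : ℕ} (h : b < k) : coeff b (f ^ k) = 0 := by
  simpa using coeff_pow_mul_zero (c := 1) hf h

/-- swap lemma -/
lemma coeff_mul_mk {f : PowerSeries K} (hf : constantCoeff f = 0) (a : ℕ → K)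
    (c0 c : PowerSeries K) (n : ℕ) :
    coeff n (c * PowerSeries.mk fun m => ∑ k ∈ range (m + 1), a k * coeff m (f ^ k * c0))
      = ∑ k ∈ range (n + 1), a k * coeff n (c * (f ^ k * c0)) := by
  rw [coeff_mul]
  have step : ∀ p ∈ antidiagonal n,
      coeff p.1 c * coeff p.2 (PowerSeries.mk fun m => ∑ k ∈ range (m + 1),
          a k * coeff m (f ^ k * c0))
        = ∑ k ∈ range (n + 1), a k * (coeff p.1 c * coeff p.2 (f ^ k * c0)) := by
    intro p hp
    rw [coeff_mk, Finset.mul_sum]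
    have hsub : range (p.2 + 1) ⊆ range (n + 1) := by
      apply Finset.range_subset_range.mpr
      have := Finset.HasAntidiagonal.antidiagonal.fst_le hp
      have := Finset.HasAntidiagonal.antidiagonal.snd_le hp
      omega
    rw [Finset.sum_subset hsub]
    · exact Finset.sum_congr rfl fun k _ => by ring
    · intro k _ hk
      have : p.2 < k := by simp [Finset.mem_range] at hk ⊢; omega
      rw [coeff_pow_mul_zero hf this]
      ring
  rw [Finset.sum_congr rfl step, Finset.sum_comm]
  refine Finset.sum_congr rfl fun k _ => ?_
  rw [← Finset.mul_sum, coeff_mul]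

lemma coeff_deriv_mk {f : PowerSeries K} (a : ℕ → K) (m : ℕ) :
    coeff m (d⁄dX K (PowerSeries.mk fun j => ∑ k ∈ range (j + 1), a k * coeff j (f ^ k)))
      = ∑ k ∈ range (m + 1), (((k : K) + 1) * a (k + 1)) * coeff m (f ^ k * d⁄dX K f) := by
  rw [coeff_derivative, coeff_mk, Finset.sum_mul, Finset.sum_range_succ']
  have h0 : a 0 * coeff (m + 1) (f ^ 0) * ((m : K) + 1) = 0 := by
    simp [coeff_one]
  rw [h0, add_zero]
  refine Finset.sum_congr rfl fun k _ => ?_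
  have hd : coeff (m + 1) (f ^ (k + 1)) * ((m : K) + 1)
      = ((k : K) + 1) * coeff m (f ^ k * d⁄dX K f) := by
    have h1 : coeff m (d⁄dX K (f ^ (k + 1))) = ((k : K) + 1) * coeff m (f ^ k * d⁄dX K f) := by
      rw [Derivation.leibniz_pow, Nat.add_sub_cancel, smul_eq_mul, map_nsmul, nsmul_eq_mul]
      push_cast; ring
    rw [← h1, coeff_derivative]
  calc a (k + 1) * coeff (m + 1) (f ^ (k + 1)) * ((m : K) + 1)
      = a (k + 1) * (coeff (m + 1) (f ^ (k + 1)) * ((m : K) + 1)) := by ring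
    _ = _ := by rw [hd]; ring

lemma coeff_zero_expPS (f : PowerSeries K) : coeff 0 (expPS f) = 1 := by
  simp [expPS, coeff_mk]

lemma coeff_zero_logPS (g : PowerSeries K) : coeff 0 (logPS g) = 0 := by
  simp [logPS, coeff_mk]

lemma logPS_eq (g : PowerSeries K) :
    logPS g = PowerSeries.mk fun m => ∑ k ∈ range (m + 1),
      (-((k : K))⁻¹) * coeff m ((1 - g) ^ k) := by
  ext m
  rw [logPS, coeff_mk, coeff_mk]
  have hset : range (m + 1) = insert 0 (Finset.Icc 1 m) := by
    ext k; simp [Nat.lt_succ_iff]; omega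
  rw [hset, Finset.sum_insert (by simp)]
  simp

lemma expPS_mul_one (f : PowerSeries K) : expPS f = PowerSeries.mk fun m =>
    ∑ k ∈ range (m + 1), ((k.factorial : K))⁻¹ * coeff m (f ^ k * 1) := by
  simp [expPS]

/-- derivative of expPS -/
lemma derivE [CharZero K] {f : PowerSeries K} (hf : constantCoeff f = 0) :
    d⁄dX K (expPS f) = expPS f * d⁄dX K f := by
  ext m
  have h2 : coeff m (d⁄dX K f * expPS f) = ∑ k ∈ range (m + 1),
      ((k.factorial : K))⁻¹ * coeff m (d⁄dX K f * (f ^ k * 1)) := by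
    rw [expPS_mul_one]; exact coeff_mul_mk hf _ _ _ m
  rw [mul_comm (expPS f), h2, expPS, coeff_deriv_mk]
  refine Finset.sum_congr rfl fun k _ => ?_
  have hfact : ((k : K) + 1) * (((k + 1).factorial : K))⁻¹ = ((k.factorial : K))⁻¹ := by
    rw [Nat.factorial_succ]
    push_cast
    rw [mul_inv, ← mul_assoc, mul_inv_cancel₀ (Nat.cast_add_one_ne_zero k), one_mul]
  rw [hfact, mul_one, mul_comm (f ^ k) (d⁄dX K f)]

/-- derivative of logPS : g * (log g)' = g' -/
lemma derivL [CharZero K] {g : PowerSeries K} (hg : constantCoeff g = 1) :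
    g * d⁄dX K (logPS g) = d⁄dX K g := by
  set w : PowerSeries K := 1 - g with hw
  have hw0 : constantCoeff w = 0 := by simp [hw, hg]
  have hdw : d⁄dX K w = -d⁄dX K g := by simp [hw]
  have hdL : d⁄dX K (logPS g) = PowerSeries.mk fun m =>
      ∑ k ∈ range (m + 1), (1 : K) * coeff m (w ^ k * d⁄dX K g) := by
    ext m
    rw [logPS_eq, coeff_deriv_mk, coeff_mk]
    refine Finset.sum_congr rfl fun k _ => ?_
    rw [hdw]
    have : ((k : K) + 1) * -((k : K) + 1)⁻¹ = -1 := by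
      rw [mul_neg, mul_inv_cancel₀ (Nat.cast_add_one_ne_zero k)]
    push_cast
    rw [this]
    simp [mul_neg, hw]
  rw [hdL]
  ext n
  rw [coeff_mul_mk hw0 (fun _ => (1 : K)) (d⁄dX K g) g n]
  have hterm : ∀ k, g * (w ^ k * d⁄dX K g) = w ^ k * d⁄dX K g - w ^ (k + 1) * d⁄dX K g := by
    intro k
    have hg2 : g = 1 - w := by rw [hw]; ring
    rw [hg2, pow_succ]
    ring
  calc ∑ k ∈ range (n + 1), (1 : K) * coeff n (g * (w ^ k * d⁄dX K g))
      = ∑ k ∈ range (n + 1),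
        (coeff n (w ^ k * d⁄dX K g) - coeff n (w ^ (k + 1) * d⁄dX K g)) := by
        refine Finset.sum_congr rfl fun k _ => ?_
        rw [one_mul, hterm k, map_sub]
    _ = coeff n (w ^ 0 * d⁄dX K g) - coeff n (w ^ (n + 1) * d⁄dX K g) :=
        Finset.sum_range_sub' (fun k => coeff n (w ^ k * d⁄dX K g)) (n + 1)
    _ = coeff n (d⁄dX K g) := by
        rw [coeff_pow_mul_zero hw0 (Nat.lt_succ_self n), sub_zero, pow_zero, one_mul]

/-- If `v(0)=0` and `c·v' + e·v` vanishes to order `N-1` with `c(0)=1`, then `v` vanishes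
to order `N`. -/
lemma zero_of_deriv [CharZero K] {c e v : PowerSeries K}
    (hc : constantCoeff c = 1) (hv0 : coeff 0 v = 0) {N : ℕ}
    (h : ∀ m, m + 1 < N → coeff m (c * d⁄dX K v + e * v) = 0) :
    ∀ j < N, coeff j v = 0 := by
  intro j
  induction j using Nat.strong_induction_on with
  | _ j ih =>
    intro hjN
    match j, hjN with
    | 0, _ => exact hv0
    | (m + 1), hjN =>
      have h1 := h m hjN
      rw [map_add, coeff_mul, coeff_mul] at h1
      have hev : ∑ p ∈ antidiagonal m, coeff p.1 e * coeff p.2 v = 0 := by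
        refine Finset.sum_eq_zero fun p hp => ?_
        have hp2 : p.2 < m + 1 := by
          have := Finset.HasAntidiagonal.antidiagonal.snd_le hp; omega
        rw [ih p.2 hp2 (lt_trans hp2 hjN), mul_zero]
      have hcv : ∑ p ∈ antidiagonal m, coeff p.1 c * coeff p.2 (d⁄dX K v)
          = coeff (m + 1) v * ((m : K) + 1) := by
        rw [Finset.sum_eq_single_of_mem (0, m) (by simp)]
        · rw [coeff_derivative, coeff_zero_eq_constantCoeff, hc, one_mul]
        · intro p hp hne
          have hpsum : p.1 + p.2 = m := Finset.HasAntidiagonal.mem_antidiagonal.mp hp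
          have hp2 : p.2 + 1 < m + 1 := by
            rcases Nat.eq_zero_or_pos p.1 with h0 | h0
            · exfalso; apply hne
              have : p.2 = m := by omega
              cases p; simp_all
            · omega
          rw [coeff_derivative, ih (p.2 + 1) hp2 (lt_trans hp2 hjN), zero_mul, mul_zero]
      rw [hcv, hev, add_zero] at h1
      have hne : ((m : K) + 1) ≠ 0 := Nat.cast_add_one_ne_zero m
      exact (mul_eq_zero.mp h1).resolve_right hne

lemma step_lemma [CharZero K] {f : PowerSeries K} (hf : constantCoeff f = 0)
    {g : PowerSeries K} (hg1 : constantCoeff g = 1) {n : ℕ} (hn : 0 < n)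
    (h : ∀ j < n, coeff j g = coeff j (expPS f)) :
    ∀ j < 2 * n, coeff j (g * (1 + f - logPS g)) = coeff j (expPS f) := by
  set E := expPS f with hE
  have hdE : d⁄dX K E = E * d⁄dX K f := derivE hf
  have hgL : g * d⁄dX K (logPS g) = d⁄dX K g := derivL hg1
  -- the residual r = g' - f'·g vanishes to order n-1
  have hr : ∀ m, m + 1 < n → coeff m (d⁄dX K g - d⁄dX K f * g) = 0 := by
    intro m hm
    have h1 : coeff m (d⁄dX K g) = coeff m (d⁄dX K E) := by
      rw [coeff_derivative, coeff_derivative, h (m + 1) hm]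
    have h2 : coeff m (d⁄dX K f * g) = coeff m (d⁄dX K f * E) := by
      rw [coeff_mul, coeff_mul]
      refine Finset.sum_congr rfl fun p hp => ?_
      have hp2 : p.2 < n := by
        have := Finset.HasAntidiagonal.antidiagonal.snd_le hp; omega
      rw [h p.2 hp2]
    rw [map_sub, h1, h2, hdE, mul_comm E (d⁄dX K f), sub_self]
  -- u = f - log g vanishes to order n
  set u : PowerSeries K := f - logPS g with hu_def
  have hu0 : coeff 0 u = 0 := by
    rw [hu_def, map_sub, coeff_zero_logPS, coeff_zero_eq_constantCoeff, hf, sub_zero]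
  have huid : g * d⁄dX K u + 0 * u = -(d⁄dX K g - d⁄dX K f * g) := by
    rw [hu_def, map_sub]
    linear_combination -hgL
  have hu : ∀ j < n, coeff j u = 0 := by
    refine zero_of_deriv (e := 0) hg1 hu0 fun m hm => ?_
    rw [huid, map_neg, hr m hm, neg_zero]
  -- D = g(1+u) - E
  set D : PowerSeries K := g * (1 + u) - E with hD_def
  have hD0 : coeff 0 D = 0 := by
    rw [hD_def, map_sub, coeff_zero_eq_constantCoeff, map_mul, hg1, map_add, map_one,
      ← coeff_zero_eq_constantCoeff, hu0, hE, coeff_zero_expPS]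
    norm_num
  -- series identity for D
  have hDid : (1 : PowerSeries K) * d⁄dX K D + (-(d⁄dX K f)) * D
      = (d⁄dX K g - d⁄dX K f * g) * u := by
    rw [hD_def, hu_def, hE]
    rw [hE] at hdE
    simp only [Derivation.leibniz, smul_eq_mul, map_add, map_sub,
      Derivation.map_one_eq_zero]
    linear_combination -hgL - hdE
  have hD : ∀ j < 2 * n, coeff j D = 0 := by
    refine zero_of_deriv (c := 1) (e := -(d⁄dX K f)) (by simp) hD0 fun m hm => ?_
    rw [hDid, coeff_mul]
    refine Finset.sum_eq_zero fun p hp => ?_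
    have hpsum : p.1 + p.2 = m := Finset.HasAntidiagonal.mem_antidiagonal.mp hp
    by_cases hp2 : p.2 < n
    · rw [hu p.2 hp2, mul_zero]
    · have hp1 : p.1 + 1 < n := by omega
      rw [hr p.1 hp1, zero_mul]
  intro j hj
  have hj' := hD j hj
  rw [hD_def, map_sub, sub_eq_zero] at hj'
  have e2 : g * (1 + f - logPS g) = g * (1 + u) := by rw [hu_def]; ring
  rw [e2, hj']

end Aux

/-- Brent's Newton iteration for the power series exponential doubles the precision at
each step: if `f(0) = 0`, `g 0 = 1` and `g (i+1) = g i * (1 + f - log (g i)) mod z^(2^(i+1))`,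
then `g i` has constant term `1` and `g i ≡ exp f mod z^(2^i)`. -/
theorem newton_exp_doubles_precision {K : Type*} [Field K] [CharZero K]
    (f : PowerSeries K) (hf : constantCoeff f = 0)
    (g : ℕ → PowerSeries K)
    (hg0 : g 0 = 1)
    (hstep : ∀ i : ℕ,
      g (i + 1) =
        ((trunc (2 ^ (i + 1)) (g i * (1 + f - logPS (g i))) : Polynomial K) : PowerSeries K)) :
    ∀ i : ℕ, constantCoeff (g i) = 1 ∧ ∀ j < 2 ^ i, coeff j (g i) = coeff j (expPS f) := by
  intro i
  induction i with
  | zero =>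
    constructor
    · rw [hg0]; simp
    · intro j hj
      interval_cases j
      rw [hg0, coeff_zero_expPS]
      simp
  | succ i ih =>
    obtain ⟨h1, h2⟩ := ih
    have hN := step_lemma hf h1 (n := 2 ^ i) (by positivity) h2
    have hpow : 2 ^ (i + 1) = 2 * 2 ^ i := by rw [pow_succ]; ring
    have hco : ∀ j < 2 ^ (i + 1),
        coeff j (g (i + 1)) = coeff j (g i * (1 + f - logPS (g i))) := by
      intro j hj
      rw [hstep i, Polynomial.coeff_coe, coeff_trunc, if_pos hj]
    constructor
    · rw [← coeff_zero_eq_constantCoeff, hco 0 (by positivity),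
        hN 0 (by positivity), coeff_zero_expPS]
    · intro j hj
      rw [hpow] at hj
      rw [hco j (by omega), hN j hj]
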